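/- arXiv:2503.23976 — 2 statements merged into one kernel-verified Lean document; each statement's English description precedes it below -/
import Mathlib

section
/- Let A be an essential real arrangement, C an unbounded chamber, and C^∨ its opposite chamber with respect to X(C) = ⟨C̄ ∩ H̄_∞⟩. Then Sep(C, C^∨) = {H ∈ A : H̄ ⊅ X(C)}; in particular if dim X(C) = ℓ − 1 then Sep(C, C^∨) = A, i.e., every hyperplane of A separates C from C^∨. -/
/- STATEMENT 11 (Proposition 2.4): for an unbounded chamber C of a real
arrangement and its opposite chamber C^∨ with respect to
X(C) = ⟨C̄ ∩ H̄_∞⟩, one has Sep(C,C^∨) = {H ∈ A : H̄ ⊉ X(C)}; in particular,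
if dim X(C) = ℓ−1 then Sep(C,C^∨) = A.

Concrete model: hyperplanes H i = {x : a i x = b i} in ℝ^ℓ; chambers are
connected components of the complement; the face at infinity C̄ ∩ H̄_∞ is the
projectivized recession cone of C, so X(C) corresponds to the linear span of
the recession cone, H̄ᵢ ⊇ X(C) means span(rec C) ⊆ ker(a i), and
dim X(C) = ℓ−1 means span(rec C) = ℝ^ℓ.  The opposite chamber C^∨ is the
chamber reached from C by passing through the relative interior of its face
at infinity: for x ∈ C and a nonzero direction d in the relative interior of
the recession cone, x + t·d lies in C^∨ for all sufficiently negative t. -/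
open Filter

/-- Sign constancy on a preconnected subset of the complement. -/
lemma aux_sign {ℓ n : ℕ} (a : Fin n → ((Fin ℓ → ℝ) →ₗ[ℝ] ℝ)) (b : Fin n → ℝ)
    {s : Set (Fin ℓ → ℝ)} (hs : IsPreconnected s) (hsub : ∀ z ∈ s, ∀ i, a i z ≠ b i)
    (i : Fin n) {y z : Fin ℓ → ℝ} (hy : y ∈ s) (hz : z ∈ s) :
    0 < (a i y - b i) * (a i z - b i) := by
  have hcont : Continuous fun w : Fin ℓ → ℝ => a i w - b i :=
    ((a i).continuous_of_finiteDimensional).sub continuous_const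
  by_contra h
  push_neg at h
  have hy0 : a i y - b i ≠ 0 := sub_ne_zero.mpr (hsub y hy i)
  have hz0 : a i z - b i ≠ 0 := sub_ne_zero.mpr (hsub z hz i)
  have hlt : (a i y - b i) * (a i z - b i) < 0 := lt_of_le_of_ne h (mul_ne_zero hy0 hz0)
  rcases mul_neg_iff.mp hlt with ⟨h1, h2⟩ | ⟨h1, h2⟩
  · obtain ⟨w, hw, hfw⟩ := hs.intermediate_value hz hy hcont.continuousOn ⟨h2.le, h1.le⟩
    exact sub_ne_zero.mpr (hsub w hw i) hfw
  · obtain ⟨w, hw, hfw⟩ := hs.intermediate_value hy hz hcont.continuousOn ⟨h1.le, h2.le⟩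
    exact sub_ne_zero.mpr (hsub w hw i) hfw

/-- A chamber equals the open convex polyhedron given by the signs of a base point. -/
lemma aux_chamber {ℓ n : ℕ} (a : Fin n → ((Fin ℓ → ℝ) →ₗ[ℝ] ℝ)) (b : Fin n → ℝ)
    (Ω : Set (Fin ℓ → ℝ)) (hΩ : Ω = {x | ∀ i, a i x ≠ b i})
    (x₀ : Fin ℓ → ℝ) (hx₀ : x₀ ∈ Ω) :
    connectedComponentIn Ω x₀ = ⋂ i, {y | 0 < (a i x₀ - b i) * (a i y - b i)} := by
  have hΩ' : ∀ z ∈ Ω, ∀ i, a i z ≠ b i := fun z hz => by rw [hΩ] at hz; exact hz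
  have hx₀' : ∀ i, a i x₀ ≠ b i := hΩ' x₀ hx₀
  apply Set.Subset.antisymm
  · intro y hy
    refine Set.mem_iInter.mpr fun i => ?_
    exact aux_sign a b isPreconnected_connectedComponentIn
      (fun z hz => hΩ' z (connectedComponentIn_subset Ω x₀ hz)) i
      (mem_connectedComponentIn hx₀) hy
  · have hopen : ∀ i : Fin n, IsOpen {y : Fin ℓ → ℝ | 0 < (a i x₀ - b i) * (a i y - b i)} := by
      intro i
      have hcont : Continuous fun y : Fin ℓ → ℝ => (a i x₀ - b i) * (a i y - b i) :=
        continuous_const.mul (((a i).continuous_of_finiteDimensional).sub continuous_const)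
      exact isOpen_Ioi.preimage hcont
    have hconv : ∀ i : Fin n, Convex ℝ {y : Fin ℓ → ℝ | 0 < (a i x₀ - b i) * (a i y - b i)} := by
      intro i
      have heq : {y : Fin ℓ → ℝ | 0 < (a i x₀ - b i) * (a i y - b i)}
          = {y : Fin ℓ → ℝ | (a i x₀ - b i) * b i < ((a i x₀ - b i) • a i) y} := by
        ext y
        simp only [Set.mem_setOf_eq, LinearMap.smul_apply, smul_eq_mul]
        constructor <;> intro h <;> nlinarith
      rw [heq]
      exact convex_halfSpace_gt (((a i x₀ - b i) • a i).isLinear) _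
    refine IsPreconnected.subset_connectedComponentIn ?_ ?_ ?_
    · exact (convex_iInter hconv).isPreconnected
    · refine Set.mem_iInter.mpr fun i => ?_
      exact mul_self_pos.mpr (sub_ne_zero.mpr (hx₀' i))
    · intro y hy
      rw [hΩ]
      intro i
      have := Set.mem_iInter.mp hy i
      simp only [Set.mem_setOf_eq] at this
      intro heq
      rw [heq, sub_self, mul_zero] at this
      exact lt_irrefl 0 this

/-- An unbounded chamber has a nonzero recession direction. -/
lemma aux_dir {ℓ n : ℕ} (a : Fin n → ((Fin ℓ → ℝ) →ₗ[ℝ] ℝ)) (b : Fin n → ℝ)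
    (x₀ : Fin ℓ → ℝ) (C : Set (Fin ℓ → ℝ))
    (hCS : C = ⋂ i, {y | 0 < (a i x₀ - b i) * (a i y - b i)})
    (hunb : ¬ Bornology.IsBounded C) :
    ∃ d : Fin ℓ → ℝ, d ≠ 0 ∧ ∀ i, 0 ≤ (a i x₀ - b i) * a i d := by
  have hseq : ∀ k : ℕ, ∃ x ∈ C, (k : ℝ) + 1 < ‖x - x₀‖ := by
    intro k
    by_contra h
    push_neg at h
    apply hunb
    rw [Metric.isBounded_iff_subset_closedBall x₀]
    refine ⟨(k : ℝ) + 1, fun x hx => ?_⟩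
    rw [Metric.mem_closedBall, dist_eq_norm]
    exact h x hx
  choose X hXC hXnorm using hseq
  have hpos : ∀ k, (0 : ℝ) < ‖X k - x₀‖ := fun k =>
    lt_of_le_of_lt (by positivity) (hXnorm k)
  set u : ℕ → (Fin ℓ → ℝ) := fun k => ‖X k - x₀‖⁻¹ • (X k - x₀) with hu_def
  have hu : ∀ k, u k ∈ Metric.sphere (0 : Fin ℓ → ℝ) 1 := by
    intro k
    rw [mem_sphere_zero_iff_norm, hu_def, norm_smul, norm_inv, norm_norm,
      inv_mul_cancel₀ (ne_of_gt (hpos k))]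
  obtain ⟨d, hdsph, φ, hφ, hlim⟩ := (isCompact_sphere (0 : Fin ℓ → ℝ) 1).tendsto_subseq hu
  have hd1 : ‖d‖ = 1 := mem_sphere_zero_iff_norm.mp hdsph
  refine ⟨d, by intro h0; rw [h0, norm_zero] at hd1; exact one_ne_zero hd1.symm, fun i => ?_⟩
  have hcont : Continuous fun v : Fin ℓ → ℝ => (a i x₀ - b i) * a i v :=
    continuous_const.mul ((a i).continuous_of_finiteDimensional)
  have hlim2 : Filter.Tendsto (fun k => (a i x₀ - b i) * a i (u (φ k))) Filter.atTop
      (nhds ((a i x₀ - b i) * a i d)) := (hcont.tendsto d).comp hlim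
  have hlow : ∀ k : ℕ, -((a i x₀ - b i) * (a i x₀ - b i)) / ((k : ℝ) + 1)
      ≤ (a i x₀ - b i) * a i (u (φ k)) := by
    intro k
    have hXi : 0 < (a i x₀ - b i) * (a i (X (φ k)) - b i) := by
      have := hXC (φ k)
      rw [hCS] at this
      exact Set.mem_iInter.mp this i
    have hval : a i (u (φ k)) = ‖X (φ k) - x₀‖⁻¹ * (a i (X (φ k)) - a i x₀) := by
      rw [hu_def]
      simp [map_smul, map_sub, smul_eq_mul]
    rw [hval]
    have hr : (0 : ℝ) < ‖X (φ k) - x₀‖ := hpos (φ k)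
    have hrk : (k : ℝ) + 1 ≤ ‖X (φ k) - x₀‖ := by
      have h1 : ((k : ℝ)) + 1 ≤ ((φ k : ℝ)) + 1 := by
        have := hφ.le_apply (x := k)
        exact_mod_cast Nat.add_le_add_right this 1
      exact h1.trans (hXnorm (φ k)).le
    have hsq : (0 : ℝ) ≤ (a i x₀ - b i) * (a i x₀ - b i) := mul_self_nonneg _
    have key : -((a i x₀ - b i) * (a i x₀ - b i)) / ‖X (φ k) - x₀‖
        ≤ (a i x₀ - b i) * (‖X (φ k) - x₀‖⁻¹ * (a i (X (φ k)) - a i x₀)) := by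
      rw [div_le_iff₀ hr]  -- careful: -(c²)/r ≤ e ↔ -(c²) ≤ e * r
      have : (a i x₀ - b i) * (‖X (φ k) - x₀‖⁻¹ * (a i (X (φ k)) - a i x₀)) * ‖X (φ k) - x₀‖
          = (a i x₀ - b i) * (a i (X (φ k)) - a i x₀) := by
        field_simp
      rw [this]
      nlinarith
    refine le_trans ?_ key
    rw [div_le_div_iff₀ (by positivity) hr]
    nlinarith
  have hlimL : Filter.Tendsto
      (fun k : ℕ => -((a i x₀ - b i) * (a i x₀ - b i)) / ((k : ℝ) + 1)) Filter.atTop (nhds 0) := by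
    have hg : Filter.Tendsto (fun k : ℕ => ((k : ℝ) + 1)) Filter.atTop Filter.atTop :=
      Filter.tendsto_atTop_add_const_right _ 1 tendsto_natCast_atTop_atTop
    exact Filter.Tendsto.div_atTop tendsto_const_nhds hg
  have := le_of_tendsto_of_tendsto' hlimL hlim2 hlow
  simpa using this

theorem stmt11 (ℓ n : ℕ)
    (a : Fin n → ((Fin ℓ → ℝ) →ₗ[ℝ] ℝ)) (b : Fin n → ℝ)
    (ha : ∀ i, a i ≠ 0)
    (Ω : Set (Fin ℓ → ℝ)) (hΩ : Ω = {x | ∀ i, a i x ≠ b i})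
    (C D : Set (Fin ℓ → ℝ))
    (hC : ∃ x ∈ Ω, C = connectedComponentIn Ω x)
    (hD : ∃ x ∈ Ω, D = connectedComponentIn Ω x)
    (hunb : ¬ Bornology.IsBounded C)
    (recC : Set (Fin ℓ → ℝ))
    (hrec : recC = {d | ∀ x ∈ C, ∀ t : ℝ, 0 ≤ t → x + t • d ∈ C})
    (hopp : ∀ x ∈ C, ∀ d ∈ intrinsicInterior ℝ recC, d ≠ 0 →
      ∀ᶠ t : ℝ in Filter.atBot, x + t • d ∈ D) :
    {i : Fin n | ∀ x ∈ C, ∀ y ∈ D, (a i x - b i) * (a i y - b i) < 0}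
      = {i : Fin n | ¬ Submodule.span ℝ recC ≤ LinearMap.ker (a i)} ∧
    (Submodule.span ℝ recC = ⊤ →
      {i : Fin n | ∀ x ∈ C, ∀ y ∈ D, (a i x - b i) * (a i y - b i) < 0} = Set.univ) := by
  classical
  obtain ⟨x₀, hx₀Ω, hCdef⟩ := hC
  obtain ⟨y₀, hy₀Ω, hDdef⟩ := hD
  have hΩ' : ∀ z ∈ Ω, ∀ i, a i z ≠ b i := fun z hz => by rw [hΩ] at hz; exact hz
  have hCS : C = ⋂ i, {y | 0 < (a i x₀ - b i) * (a i y - b i)} :=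
    hCdef.trans (aux_chamber a b Ω hΩ x₀ hx₀Ω)
  have hx₀C : x₀ ∈ C := hCdef ▸ mem_connectedComponentIn hx₀Ω
  have hCpre : IsPreconnected C := hCdef ▸ isPreconnected_connectedComponentIn
  have hCsubΩ : ∀ z ∈ C, ∀ i, a i z ≠ b i := by
    intro z hz
    rw [hCdef] at hz
    exact hΩ' z (connectedComponentIn_subset Ω x₀ hz)
  have hDpre : IsPreconnected D := hDdef ▸ isPreconnected_connectedComponentIn
  have hDsub : ∀ z ∈ D, ∀ i, a i z ≠ b i := by
    intro z hz
    rw [hDdef] at hz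
    exact hΩ' z (connectedComponentIn_subset Ω y₀ hz)
  -- recession cone description
  have hK : ∀ d, d ∈ recC ↔ ∀ i, 0 ≤ (a i x₀ - b i) * a i d := by
    intro d
    constructor
    · intro hd i
      by_contra hneg
      rw [not_le] at hneg
      set t : ℝ := ((a i x₀ - b i) * (a i x₀ - b i)) / (-((a i x₀ - b i) * a i d)) with ht_def
      have ht : 0 ≤ t := div_nonneg (mul_self_nonneg _) (by linarith)
      rw [hrec] at hd
      have hmem := hd x₀ hx₀C t ht
      rw [hCS] at hmem
      have h2 := Set.mem_iInter.mp hmem i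
      simp only [Set.mem_setOf_eq] at h2
      have hexp : a i (x₀ + t • d) = a i x₀ + t * a i d := by
        simp [map_add, map_smul, smul_eq_mul]
      rw [hexp] at h2
      have hne : (a i x₀ - b i) * a i d ≠ 0 := ne_of_lt hneg
      have h3 : t * ((a i x₀ - b i) * a i d) = -((a i x₀ - b i) * (a i x₀ - b i)) := by
        have h5 := div_mul_cancel₀ ((a i x₀ - b i) * (a i x₀ - b i)) (neg_ne_zero.mpr hne)
        rw [ht_def]
        linear_combination -h5
      have h4 : (a i x₀ - b i) * (a i x₀ + t * a i d - b i)
          = (a i x₀ - b i) * (a i x₀ - b i) + t * ((a i x₀ - b i) * a i d) := by ring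
      rw [h4, h3] at h2
      linarith
    · intro hd
      rw [hrec]
      intro x hx t ht
      rw [hCS] at hx ⊢
      refine Set.mem_iInter.mpr fun i => ?_
      have h1 := Set.mem_iInter.mp hx i
      simp only [Set.mem_setOf_eq] at h1 ⊢
      have hexp : a i (x + t • d) = a i x + t * a i d := by
        simp [map_add, map_smul, smul_eq_mul]
      rw [hexp]
      nlinarith [mul_nonneg ht (hd i)]
  obtain ⟨dbar, hdbar0, hdbarK⟩ := aux_dir a b x₀ C hCS hunb
  have hdbarrec : dbar ∈ recC := (hK dbar).mpr hdbarK
  have h0rec : (0 : Fin ℓ → ℝ) ∈ recC := (hK 0).mpr (by intro i; simp)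
  have hspan : ∀ i, Submodule.span ℝ recC ≤ LinearMap.ker (a i) ↔ ∀ v ∈ recC, a i v = 0 := by
    intro i
    rw [Submodule.span_le]
    constructor
    · intro h v hv; exact LinearMap.mem_ker.mp (h hv)
    · intro h v hv; exact LinearMap.mem_ker.mpr (h v hv)
  set e : Fin n → (Fin ℓ → ℝ) :=
    fun i => if h : ∃ v ∈ recC, a i v ≠ 0 then h.choose else 0 with he_def
  have herec : ∀ i, e i ∈ recC := by
    intro i
    rw [he_def]
    dsimp only
    split
    · next h => exact h.choose_spec.1
    · exact h0rec
  have hene : ∀ i, (¬ Submodule.span ℝ recC ≤ LinearMap.ker (a i)) → a i (e i) ≠ 0 := by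
    intro i hi
    have hex : ∃ v ∈ recC, a i v ≠ 0 := by
      by_contra hno
      push_neg at hno
      exact hi ((hspan i).mpr hno)
    rw [he_def]
    dsimp only
    rw [dif_pos hex]
    exact hex.choose_spec.2
  set w : Fin ℓ → ℝ := dbar + ∑ j, e j with hw_def
  have hwa : ∀ i, a i w = a i dbar + ∑ j, a i (e j) := by
    intro i
    rw [hw_def]
    simp [map_add, map_sum]
  have hwrec : w ∈ recC := by
    refine (hK w).mpr fun i => ?_
    rw [hwa i, mul_add, Finset.mul_sum]
    exact add_nonneg ((hK dbar).mp hdbarrec i)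
      (Finset.sum_nonneg fun j _ => (hK (e j)).mp (herec j) i)
  have hwpos : ∀ i, (¬ Submodule.span ℝ recC ≤ LinearMap.ker (a i)) →
      0 < (a i x₀ - b i) * a i w := by
    intro i hi
    have hc0 : a i x₀ - b i ≠ 0 := sub_ne_zero.mpr (hΩ' x₀ hx₀Ω i)
    have hpos_i : 0 < (a i x₀ - b i) * a i (e i) :=
      lt_of_le_of_ne ((hK (e i)).mp (herec i) i) (Ne.symm (mul_ne_zero hc0 (hene i hi)))
    rw [hwa i, mul_add, Finset.mul_sum]
    refine add_pos_of_nonneg_of_pos ((hK dbar).mp hdbarrec i) ?_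
    exact Finset.sum_pos' (fun j _ => (hK (e j)).mp (herec j) i)
      ⟨i, Finset.mem_univ i, hpos_i⟩
  have hwne : w ≠ 0 := by
    by_cases hex : ∃ i, ¬ Submodule.span ℝ recC ≤ LinearMap.ker (a i)
    · obtain ⟨i, hi⟩ := hex
      intro h0
      have := hwpos i hi
      rw [h0, map_zero, mul_zero] at this
      exact lt_irrefl 0 this
    · push_neg at hex
      have hall : ∀ j, e j = 0 := by
        intro j
        rw [he_def]
        dsimp only
        rw [dif_neg]
        rintro ⟨v, hv, hav⟩
        exact hav (((hspan j).mp (hex j)) v hv)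
      rw [hw_def]
      simpa [hall] using hdbar0
  have hwint : w ∈ intrinsicInterior ℝ recC := by
    rw [mem_intrinsicInterior]
    refine ⟨⟨w, subset_affineSpan ℝ recC hwrec⟩, ?_, rfl⟩
    set U : Set (Fin ℓ → ℝ) :=
      {v | ∀ i, ¬ Submodule.span ℝ recC ≤ LinearMap.ker (a i) →
        0 < (a i x₀ - b i) * a i v} with hU_def
    have hUopen : IsOpen U := by
      rw [hU_def, Set.setOf_forall]
      refine isOpen_iInter_of_finite fun i => ?_
      by_cases hP : Submodule.span ℝ recC ≤ LinearMap.ker (a i)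
      · simp [hP]
      · have heq2 : {v : Fin ℓ → ℝ | ¬ Submodule.span ℝ recC ≤ LinearMap.ker (a i) →
            0 < (a i x₀ - b i) * a i v} = {v | 0 < (a i x₀ - b i) * a i v} := by
          ext v
          simp [hP]
        rw [heq2]
        exact isOpen_Ioi.preimage (continuous_const.mul (a i).continuous_of_finiteDimensional)
    have hsub : (Subtype.val ⁻¹' U : Set (affineSpan ℝ recC)) ⊆ Subtype.val ⁻¹' recC := by
      rintro ⟨v, hv⟩ hvU
      simp only [Set.mem_preimage] at hvU ⊢
      refine (hK v).mpr fun i => ?_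
      by_cases hP : Submodule.span ℝ recC ≤ LinearMap.ker (a i)
      · have hvspan : v ∈ Submodule.span ℝ recC :=
          Submodule.mem_toAffineSubspace.mp (affineSpan_le_toAffineSubspace_span hv)
        have hv0 : a i v = 0 := LinearMap.mem_ker.mp (hP hvspan)
        rw [hv0, mul_zero]
      · exact (hvU i hP).le
    exact interior_maximal hsub (hUopen.preimage continuous_subtype_val)
      (by simp only [Set.mem_preimage]; exact fun i hi => hwpos i hi)
  have heq : {i : Fin n | ∀ x ∈ C, ∀ y ∈ D, (a i x - b i) * (a i y - b i) < 0}
      = {i : Fin n | ¬ Submodule.span ℝ recC ≤ LinearMap.ker (a i)} := by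
    ext i
    simp only [Set.mem_setOf_eq]
    constructor
    · intro hsep hle
      have haw : a i w = 0 := LinearMap.mem_ker.mp (hle (Submodule.subset_span hwrec))
      obtain ⟨t, htD⟩ := (hopp x₀ hx₀C w hwint hwne).exists
      have h1 := hsep x₀ hx₀C _ htD
      have hval : a i (x₀ + t • w) = a i x₀ := by
        simp [map_add, map_smul, smul_eq_mul, haw]
      rw [hval] at h1
      exact absurd h1 (not_lt.mpr (mul_self_nonneg _))
    · intro hi x hx y hy
      have hp : 0 < (a i x₀ - b i) * a i w := hwpos i hi
      have hev1 := hopp x₀ hx₀C w hwint hwne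
      have hev2 : ∀ᶠ t : ℝ in Filter.atBot,
          (a i x₀ - b i) * (a i (x₀ + t • w) - b i) < 0 := by
        have hevt : ∀ᶠ t : ℝ in Filter.atBot,
            t ≤ (-((a i x₀ - b i) * (a i x₀ - b i)) - 1) / ((a i x₀ - b i) * a i w) :=
          Filter.eventually_le_atBot _
        filter_upwards [hevt] with t htle
        have hexp : a i (x₀ + t • w) = a i x₀ + t * a i w := by
          simp [map_add, map_smul, smul_eq_mul]
        rw [hexp]
        have h2 : t * ((a i x₀ - b i) * a i w)
            ≤ ((-((a i x₀ - b i) * (a i x₀ - b i)) - 1) / ((a i x₀ - b i) * a i w))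
              * ((a i x₀ - b i) * a i w) :=
          mul_le_mul_of_nonneg_right htle hp.le
        rw [div_mul_cancel₀ _ (ne_of_gt hp)] at h2
        clear hi
        nlinarith
      obtain ⟨t, htD, htneg⟩ := (hev1.and hev2).exists
      have h1 : 0 < (a i x₀ - b i) * (a i x - b i) := aux_sign a b hCpre hCsubΩ i hx₀C hx
      have h2 : 0 < (a i (x₀ + t • w) - b i) * (a i y - b i) :=
        aux_sign a b hDpre hDsub i htD hy
      clear hi
      nlinarith [mul_pos h1 h2, mul_neg_of_pos_of_neg (mul_pos h1 h2) htneg,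
        sq_nonneg ((a i x₀ - b i) * (a i (x₀ + t • w) - b i))]
  refine ⟨heq, fun htop => ?_⟩
  rw [heq]
  ext i
  simp only [Set.mem_setOf_eq, Set.mem_univ, iff_true]
  rw [htop]
  intro hle
  exact ha i (LinearMap.ker_eq_top.mp (top_le_iff.mp hle))
end

section
/- Taking the opposite chamber C ↦ C^∨ with respect to X(C) = ⟨C̄ ∩ H̄_∞⟩ is an involution on the set of unbounded chambers of a real arrangement: (C^∨)^∨ = C for all unbounded chambers C. -/
open Set Filter

private lemma chamber_eq {ℓ n : ℕ} (a : Fin n → ((Fin ℓ → ℝ) →ₗ[ℝ] ℝ)) (b : Fin n → ℝ)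
    (Ω : Set (Fin ℓ → ℝ)) (hΩ : Ω = {x | ∀ i, a i x ≠ b i}) (p : Fin ℓ → ℝ) (hp : p ∈ Ω) :
    connectedComponentIn Ω p = {z | ∀ i, 0 < (a i p - b i) * (a i z - b i)} := by
  have hpne : ∀ i, a i p - b i ≠ 0 := by
    intro i
    rw [hΩ] at hp
    exact sub_ne_zero.2 (hp i)
  set P := {z | ∀ i, 0 < (a i p - b i) * (a i z - b i)} with hP
  have hPsub : P ⊆ Ω := by
    rw [hΩ]
    intro z hz i hzi
    have h1 := hz i
    rw [hzi] at h1
    simp at h1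
  have hpP : p ∈ P := fun i => mul_self_pos.2 (hpne i)
  have hconv : Convex ℝ P := by
    have hPe : P = ⋂ i, {z | (a i p - b i) * b i < ((a i p - b i) • a i) z} := by
      ext z
      simp only [hP, mem_iInter, mem_setOf_eq, LinearMap.smul_apply, smul_eq_mul]
      constructor
      · intro hz i
        have h1 := hz i
        nlinarith [h1]
      · intro hz i
        have h1 := hz i
        nlinarith [h1]
    rw [hPe]
    exact convex_iInter fun i => convex_halfSpace_gt (LinearMap.isLinear _) _
  have hopen : IsOpen P := by
    have hPe : P = ⋂ i, (fun z => (a i p - b i) * (a i z - b i)) ⁻¹' (Set.Ioi 0) := by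
      ext z
      simp [hP]
    rw [hPe]
    exact isOpen_iInter_of_finite fun i =>
      isOpen_Ioi.preimage
        (continuous_const.mul ((a i).continuous_of_finiteDimensional.sub continuous_const))
  apply Subset.antisymm
  · intro z hz i
    by_contra hle
    push_neg at hle
    have hpre : IsPreconnected (connectedComponentIn Ω p) := isPreconnected_connectedComponentIn
    have hpmem : p ∈ connectedComponentIn Ω p := mem_connectedComponentIn hp
    have hsub : connectedComponentIn Ω p ⊆ Ω := connectedComponentIn_subset Ω p
    have hcont : ContinuousOn (fun w => a i w - b i) (connectedComponentIn Ω p) :=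
      ((a i).continuous_of_finiteDimensional.sub continuous_const).continuousOn
    rcases lt_or_gt_of_ne (hpne i) with hneg | hpos
    · have hz' : 0 ≤ a i z - b i := by nlinarith
      obtain ⟨w, hw, hw0⟩ := hpre.intermediate_value hpmem hz hcont ⟨hneg.le, hz'⟩
      have hwΩ := hsub hw
      rw [hΩ] at hwΩ
      exact hwΩ i (sub_eq_zero.1 hw0)
    · have hz' : a i z - b i ≤ 0 := by nlinarith
      obtain ⟨w, hw, hw0⟩ := hpre.intermediate_value hz hpmem hcont ⟨hz', hpos.le⟩
      have hwΩ := hsub hw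
      rw [hΩ] at hwΩ
      exact hwΩ i (sub_eq_zero.1 hw0)
  · exact hconv.isPreconnected.subset_connectedComponentIn hpP hPsub

private lemma recCone_eq {ℓ n : ℕ} (a : Fin n → ((Fin ℓ → ℝ) →ₗ[ℝ] ℝ)) (b : Fin n → ℝ)
    (s : Fin n → ℝ) (C : Set (Fin ℓ → ℝ))
    (hCdesc : C = {z | ∀ i, 0 < s i * (a i z - b i)}) (p : Fin ℓ → ℝ) (hp : p ∈ C) :
    {d | ∀ x ∈ C, ∀ t : ℝ, 0 ≤ t → x + t • d ∈ C} = {d | ∀ i, 0 ≤ s i * (a i d)} := by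
  ext d
  simp only [mem_setOf_eq]
  constructor
  · intro hd i
    by_contra hneg
    push_neg at hneg
    have hApos : 0 < s i * (a i p - b i) := by
      rw [hCdesc] at hp
      exact hp i
    have hBne : s i * a i d ≠ 0 := ne_of_lt hneg
    have ht0 : 0 ≤ s i * (a i p - b i) / (-(s i * a i d)) := by
      apply div_nonneg hApos.le
      linarith
    have hmem := hd p hp _ ht0
    rw [hCdesc] at hmem
    have h1 := hmem i
    simp only [map_add, map_smul, smul_eq_mul] at h1
    have h2 : s i * (a i p + s i * (a i p - b i) / (-(s i * a i d)) * a i d - b i)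
        = s i * (a i p - b i) + (s i * (a i p - b i) / (-(s i * a i d))) * (s i * a i d) := by
      ring
    have h3 : s i * (a i p - b i) + (s i * (a i p - b i) / (-(s i * a i d))) * (s i * a i d) = 0 := by
      rw [div_neg, neg_mul, div_mul_cancel₀ _ hBne]
      ring
    rw [h2, h3] at h1
    exact lt_irrefl 0 h1
  · intro hd x hx t ht
    rw [hCdesc] at hx ⊢
    intro i
    have h1 := hx i
    have h2 : 0 ≤ t * (s i * a i d) := mul_nonneg ht (hd i)
    simp only [map_add, map_smul, smul_eq_mul]
    nlinarith [h1, h2]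

private lemma relint_sub {V : Type*} [NormedAddCommGroup V] [NormedSpace ℝ V]
    (K : Set V) (e v : V) (he : e ∈ intrinsicInterior ℝ K) (h0 : (0 : V) ∈ K) (hv : v ∈ K) :
    ∃ δ : ℝ, 0 < δ ∧ e - δ • v ∈ K := by
  obtain ⟨e', he', hee⟩ := mem_intrinsicInterior.1 he
  rcases eq_or_ne v 0 with rfl | hvne
  · refine ⟨1, one_pos, ?_⟩
    simpa using intrinsicInterior_subset he
  obtain ⟨ε, hε, hball⟩ := Metric.isOpen_iff.1 isOpen_interior e' he'
  have hvn : (0:ℝ) < ‖v‖ := norm_pos_iff.2 hvne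
  refine ⟨ε / (2 * ‖v‖), by positivity, ?_⟩
  have h1 : e ∈ affineSpan ℝ K := subset_affineSpan ℝ K (intrinsicInterior_subset he)
  have h2 : v ∈ affineSpan ℝ K := subset_affineSpan ℝ K hv
  have h3 : (0 : V) ∈ affineSpan ℝ K := subset_affineSpan ℝ K h0
  have hmem : e - (ε / (2 * ‖v‖)) • v ∈ affineSpan ℝ K := by
    have := AffineSubspace.smul_vsub_vadd_mem (affineSpan ℝ K) (ε / (2 * ‖v‖)) h3 h2 h1
    simpa [vsub_eq_sub, vadd_eq_add, zero_sub, smul_neg, sub_eq_add_neg, add_comm] using this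
  set w : affineSpan ℝ K := ⟨e - (ε / (2 * ‖v‖)) • v, hmem⟩ with hw
  have hwball : w ∈ Metric.ball e' ε := by
    rw [Metric.mem_ball, Subtype.dist_eq, hw, hee]
    have : (e - (ε / (2 * ‖v‖)) • v) - e = -((ε / (2 * ‖v‖)) • v) := by abel
    rw [dist_eq_norm, this, norm_neg, norm_smul, Real.norm_eq_abs,
      abs_of_pos (by positivity : (0:ℝ) < ε / (2 * ‖v‖))]
    rw [div_mul_eq_mul_div, mul_comm]
    rw [div_lt_iff₀ (by positivity)]
    nlinarith
  have hKmem : w ∈ (Subtype.val ⁻¹' K : Set (affineSpan ℝ K)) := interior_subset (hball hwball)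
  exact hKmem

private lemma relint_zero {V : Type*} [NormedAddCommGroup V] [NormedSpace ℝ V]
    (K : Set V) (e : V) (he : e ∈ intrinsicInterior ℝ K) (h0 : (0 : V) ∈ K)
    (φ : V →ₗ[ℝ] ℝ) (hφ : ∀ w ∈ K, 0 ≤ φ w) (hφe : φ e = 0) :
    ∀ v ∈ K, φ v = 0 := by
  intro v hv
  obtain ⟨δ, hδ, hmem⟩ := relint_sub K e v he h0 hv
  have h1 := hφ _ hmem
  simp only [map_sub, map_smul, hφe, smul_eq_mul, zero_sub] at h1
  have h2 := hφ v hv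
  nlinarith

private lemma exists_relint_ne_zero {V : Type*} [NormedAddCommGroup V] [NormedSpace ℝ V]
    [FiniteDimensional ℝ V] (K : Set V) (hK : Convex ℝ K) (h0 : (0 : V) ∈ K)
    (v : V) (hv : v ∈ K) (hvne : v ≠ 0) :
    ∃ d, d ∈ intrinsicInterior ℝ K ∧ d ≠ 0 := by
  obtain ⟨e, he⟩ := Set.Nonempty.intrinsicInterior hK ⟨0, h0⟩
  rcases eq_or_ne e 0 with rfl | hne
  · obtain ⟨e', he', hee⟩ := mem_intrinsicInterior.1 he
    obtain ⟨ε, hε, hball⟩ := Metric.isOpen_iff.1 isOpen_interior e' he'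
    have hvn : (0:ℝ) < ‖v‖ := norm_pos_iff.2 hvne
    have h2 : v ∈ affineSpan ℝ K := subset_affineSpan ℝ K hv
    have h3 : (0 : V) ∈ affineSpan ℝ K := subset_affineSpan ℝ K h0
    have hmem : (ε / (2 * ‖v‖)) • v ∈ affineSpan ℝ K := by
      have := AffineSubspace.smul_vsub_vadd_mem (affineSpan ℝ K) (ε / (2 * ‖v‖)) h2 h3 h3
      simpa [vsub_eq_sub, vadd_eq_add] using this
    set w : affineSpan ℝ K := ⟨(ε / (2 * ‖v‖)) • v, hmem⟩ with hw
    have hwball : w ∈ Metric.ball e' ε := by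
      rw [Metric.mem_ball, Subtype.dist_eq, hw, hee]
      rw [dist_eq_norm, sub_zero, norm_smul, Real.norm_eq_abs,
        abs_of_pos (by positivity : (0:ℝ) < ε / (2 * ‖v‖))]
      rw [div_mul_eq_mul_div, mul_comm]
      rw [div_lt_iff₀ (by positivity)]
      nlinarith
    refine ⟨(ε / (2 * ‖v‖)) • v, ?_, ?_⟩
    · exact mem_intrinsicInterior.2 ⟨w, hball hwball, rfl⟩
    · exact smul_ne_zero (by positivity) hvne
  · exact ⟨e, he, hne⟩

private lemma bounded_of_trivial_recCone {ℓ n : ℕ} (a : Fin n → ((Fin ℓ → ℝ) →ₗ[ℝ] ℝ))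
    (b : Fin n → ℝ) (s : Fin n → ℝ) (C : Set (Fin ℓ → ℝ))
    (hCdesc : C = {z | ∀ i, 0 < s i * (a i z - b i)})
    (hcon : ∀ v : Fin ℓ → ℝ, (∀ i, 0 ≤ s i * (a i v)) → v = 0) :
    Bornology.IsBounded C := by
  by_contra hnb
  rw [isBounded_iff_forall_norm_le] at hnb
  push_neg at hnb
  choose x hxC hxn using hnb
  set y : ℕ → Fin ℓ → ℝ := fun k => x ((k : ℝ) + 1) with hy
  have hyC : ∀ k, y k ∈ C := fun k => hxC _
  have hyn : ∀ k : ℕ, (k : ℝ) + 1 < ‖y k‖ := fun k => hxn _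
  have hypos : ∀ k, (0:ℝ) < ‖y k‖ := fun k => by
    have := hyn k
    have : (0:ℝ) ≤ (k:ℝ) := Nat.cast_nonneg k
    linarith [hyn k]
  set dseq : ℕ → Fin ℓ → ℝ := fun k => ‖y k‖⁻¹ • y k with hdseq
  have hd1 : ∀ k, dseq k ∈ Metric.sphere (0 : Fin ℓ → ℝ) 1 := by
    intro k
    rw [mem_sphere_zero_iff_norm, hdseq]
    rw [norm_smul, norm_inv, norm_norm]
    field_simp
    exact div_self (hypos k).ne'
  obtain ⟨d, hdsph, φ, hφ, hlim⟩ := (isCompact_sphere (0 : Fin ℓ → ℝ) 1).tendsto_subseq hd1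
  have hd0 : d ≠ 0 := by
    intro hdd
    rw [hdd, mem_sphere_zero_iff_norm] at hdsph
    simp at hdsph
  apply hd0
  apply hcon
  intro i
  have hnorm : Tendsto (fun k => ‖y (φ k)‖) atTop atTop := by
    have h1 : Tendsto (fun k : ℕ => (k : ℝ) + 1) atTop atTop :=
      tendsto_atTop_add_const_right _ 1 tendsto_natCast_atTop_atTop
    refine tendsto_atTop_mono ?_ h1
    intro k
    have h2 : (k : ℝ) ≤ (φ k : ℝ) := Nat.cast_le.2 (hφ.le_apply)
    have h3 := hyn (φ k)
    linarith
  have hlow : Tendsto (fun k => (s i * b i) / ‖y (φ k)‖) atTop (nhds 0) :=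
    Tendsto.div_atTop tendsto_const_nhds hnorm
  have hcontf : Continuous fun w : Fin ℓ → ℝ => s i * a i w :=
    continuous_const.mul (a i).continuous_of_finiteDimensional
  have hlim1 : Tendsto (fun k => s i * a i (dseq (φ k))) atTop (nhds (s i * a i d)) := by
    have := (hcontf.tendsto d).comp hlim
    exact this
  refine le_of_tendsto_of_tendsto' hlow hlim1 ?_
  intro k
  have hpos := hypos (φ k)
  have hCk := hyC (φ k)
  rw [hCdesc] at hCk
  have h1 := hCk i
  rw [hdseq]
  simp only [map_smul, smul_eq_mul]
  rw [div_le_iff₀ hpos]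
  have h2 : s i * (‖y (φ k)‖⁻¹ * a i (y (φ k))) * ‖y (φ k)‖ = s i * a i (y (φ k)) := by
    field_simp
  rw [h2]
  nlinarith



/- STATEMENT 18: taking the opposite chamber with respect to
X(C) = ⟨C̄ ∩ H̄_∞⟩ is an involution on unbounded chambers: (C^∨)^∨ = C.

Concrete model: hyperplanes H i = {x : a i x = b i} in ℝ^ℓ; chambers are
connected components of the complement.  `Opp C D` encodes D = C^∨: for any
x ∈ C and any nonzero direction d in the relative interior of the recession
cone of C (i.e. an interior point of the face at infinity C̄ ∩ H̄_∞), the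
point x + t·d lies in D for all sufficiently negative t.  The involution
property (C^∨)^∨ = C is then: Opp C D → Opp D C. -/
theorem stmt18 (ℓ n : ℕ)
    (a : Fin n → ((Fin ℓ → ℝ) →ₗ[ℝ] ℝ)) (b : Fin n → ℝ)
    (ha : ∀ i, a i ≠ 0)
    (Ω : Set (Fin ℓ → ℝ)) (hΩ : Ω = {x | ∀ i, a i x ≠ b i})
    (recCone : Set (Fin ℓ → ℝ) → Set (Fin ℓ → ℝ))
    (hrec : ∀ C, recCone C = {d | ∀ x ∈ C, ∀ t : ℝ, 0 ≤ t → x + t • d ∈ C})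
    (Opp : Set (Fin ℓ → ℝ) → Set (Fin ℓ → ℝ) → Prop)
    (hOpp : ∀ C D, Opp C D ↔ ∀ x ∈ C, ∀ d ∈ intrinsicInterior ℝ (recCone C), d ≠ 0 →
      ∀ᶠ t : ℝ in Filter.atBot, x + t • d ∈ D)
    (C D : Set (Fin ℓ → ℝ))
    (hC : ∃ x ∈ Ω, C = connectedComponentIn Ω x)
    (hD : ∃ x ∈ Ω, D = connectedComponentIn Ω x)
    (hunbC : ¬ Bornology.IsBounded C)
    (h : Opp C D) : Opp D C := by
  classical
  obtain ⟨p, hpΩ, hCeq⟩ := hC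
  obtain ⟨q, hqΩ, hDeq⟩ := hD
  have hsne : ∀ i, a i p - b i ≠ 0 := fun i => sub_ne_zero.2 (by rw [hΩ] at hpΩ; exact hpΩ i)
  have hune : ∀ i, a i q - b i ≠ 0 := fun i => sub_ne_zero.2 (by rw [hΩ] at hqΩ; exact hqΩ i)
  have hCd : C = {z | ∀ i, 0 < (a i p - b i) * (a i z - b i)} := by
    rw [hCeq]; exact chamber_eq a b Ω hΩ p hpΩ
  have hDd : D = {z | ∀ i, 0 < (a i q - b i) * (a i z - b i)} := by
    rw [hDeq]; exact chamber_eq a b Ω hΩ q hqΩ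
  have hpC : p ∈ C := by rw [hCd]; intro i; exact mul_self_pos.2 (hsne i)
  have hqD : q ∈ D := by rw [hDd]; intro i; exact mul_self_pos.2 (hune i)
  have hKC : recCone C = {v : Fin ℓ → ℝ | ∀ i, 0 ≤ (a i p - b i) * a i v} := by
    rw [hrec]
    exact recCone_eq a b (fun i => a i p - b i) C hCd p hpC
  have hKD : recCone D = {v : Fin ℓ → ℝ | ∀ i, 0 ≤ (a i q - b i) * a i v} := by
    rw [hrec]
    exact recCone_eq a b (fun i => a i q - b i) D hDd q hqD
  have h0KC : (0 : Fin ℓ → ℝ) ∈ {v : Fin ℓ → ℝ | ∀ i, 0 ≤ (a i p - b i) * a i v} := by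
    simp
  have h0KD : (0 : Fin ℓ → ℝ) ∈ {v : Fin ℓ → ℝ | ∀ i, 0 ≤ (a i q - b i) * a i v} := by
    simp
  have hKCconv : Convex ℝ {v : Fin ℓ → ℝ | ∀ i, 0 ≤ (a i p - b i) * a i v} := by
    have he : {v : Fin ℓ → ℝ | ∀ i, 0 ≤ (a i p - b i) * a i v}
        = ⋂ i, {v : Fin ℓ → ℝ | (0:ℝ) ≤ ((a i p - b i) • a i) v} := by
      ext z
      simp [Set.mem_iInter, LinearMap.smul_apply, smul_eq_mul]
    rw [he]
    exact convex_iInter fun i => convex_halfSpace_ge (LinearMap.isLinear _) _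
  obtain ⟨v0, hv0K, hv0ne⟩ : ∃ v : Fin ℓ → ℝ, (∀ i, 0 ≤ (a i p - b i) * a i v) ∧ v ≠ 0 := by
    by_contra hc
    push_neg at hc
    exact hunbC (bounded_of_trivial_recCone a b (fun i => a i p - b i) C hCd hc)
  obtain ⟨d0, hd0ri, hd0ne⟩ := exists_relint_ne_zero _ hKCconv h0KC v0 hv0K hv0ne
  have hd0K : ∀ i, 0 ≤ (a i p - b i) * a i d0 := intrinsicInterior_subset hd0ri
  rw [hOpp] at h
  have hseg := h p hpC d0 (by rw [hKC]; exact hd0ri) hd0ne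
  obtain ⟨T, hT⟩ := Filter.eventually_atBot.1 hseg
  have hTD : ∀ t ≤ T, ∀ i, 0 < (a i q - b i) * (a i p + t * a i d0 - b i) := by
    intro t ht i
    have h1 := hT t ht
    rw [hDd] at h1
    have h2 := h1 i
    simpa [map_add, map_smul, smul_eq_mul] using h2
  have hsuI0 : ∀ i, a i d0 = 0 → 0 < (a i p - b i) * (a i q - b i) := by
    intro i hai
    have h1 := hTD T le_rfl i
    rw [hai] at h1
    nlinarith [h1]
  have hneg0 : ∀ i, a i d0 ≠ 0 → (a i q - b i) * a i d0 < 0 := by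
    intro i hai
    by_contra hge
    push_neg at hge
    have hBpos : 0 < (a i q - b i) * a i d0 :=
      lt_of_le_of_ne hge (Ne.symm (mul_ne_zero (hune i) hai))
    have htle : min T (-((a i q - b i) * (a i p - b i)) / ((a i q - b i) * a i d0))
        ≤ -((a i q - b i) * (a i p - b i)) / ((a i q - b i) * a i d0) := min_le_right _ _
    have ht := hTD (min T (-((a i q - b i) * (a i p - b i)) / ((a i q - b i) * a i d0)))
      (min_le_left _ _) i
    have f2 : (-((a i q - b i) * (a i p - b i)) / ((a i q - b i) * a i d0)) * ((a i q - b i) * a i d0)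
        = -((a i q - b i) * (a i p - b i)) := div_mul_cancel₀ _ hBpos.ne'
    have f1 := mul_le_mul_of_nonneg_right htle hBpos.le
    nlinarith [ht, f1, f2]
  have hposd0 : ∀ i, a i d0 ≠ 0 → 0 < (a i p - b i) * a i d0 := fun i hai =>
    lt_of_le_of_ne (hd0K i) (Ne.symm (mul_ne_zero (hsne i) hai))
  have hsuneg : ∀ i, a i d0 ≠ 0 → (a i p - b i) * (a i q - b i) < 0 := by
    intro i hai
    by_contra hge
    push_neg at hge
    nlinarith [hposd0 i hai, hneg0 i hai, mul_nonneg hge (sq_nonneg (a i d0))]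
  have hI0ker : ∀ i, a i d0 = 0 → ∀ w : Fin ℓ → ℝ,
      (∀ j, 0 ≤ (a j p - b j) * a j w) → a i w = 0 := by
    intro i hai w hw
    have hz := relint_zero {v : Fin ℓ → ℝ | ∀ j, 0 ≤ (a j p - b j) * a j v} d0 hd0ri h0KC
      ((a i p - b i) • a i)
      (fun w hwK => by simpa [LinearMap.smul_apply, smul_eq_mul] using hwK i)
      (by simp [LinearMap.smul_apply, smul_eq_mul, hai])
    have h1 := hz w hw
    simp only [LinearMap.smul_apply, smul_eq_mul] at h1
    exact (mul_eq_zero.1 h1).resolve_left (hsne i)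
  rw [hOpp]
  intro y hyD e heri hene
  rw [hKD] at heri
  have heK : ∀ i, 0 ≤ (a i q - b i) * a i e := intrinsicInterior_subset heri
  have hyDi : ∀ i, 0 < (a i q - b i) * (a i y - b i) := by rw [hDd] at hyD; exact hyD
  have hnegd0KD : ∀ i, 0 ≤ (a i q - b i) * a i (-d0) := by
    intro i
    rw [map_neg]
    by_cases hai : a i d0 = 0
    · rw [hai]; simp
    · nlinarith [hneg0 i hai]
  have hKDker : ∀ i, (a i q - b i) * a i e = 0 → ∀ w : Fin ℓ → ℝ,
      (∀ j, 0 ≤ (a j q - b j) * a j w) → a i w = 0 := by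
    intro i hie w hw
    have hz := relint_zero {v : Fin ℓ → ℝ | ∀ j, 0 ≤ (a j q - b j) * a j v} e heri h0KD
      ((a i q - b i) • a i)
      (fun w hwK => by simpa [LinearMap.smul_apply, smul_eq_mul] using hwK i)
      (by simpa [LinearMap.smul_apply, smul_eq_mul] using hie)
    have h1 := hz w hw
    simp only [LinearMap.smul_apply, smul_eq_mul] at h1
    exact (mul_eq_zero.1 h1).resolve_left (hune i)
  have hmain : ∀ i, (0 < (a i q - b i) * a i e ∧ (a i p - b i) * a i e < 0)
      ∨ (a i e = 0 ∧ 0 < (a i p - b i) * (a i q - b i)) := by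
    intro i
    by_cases hai : a i d0 = 0
    · right
      refine ⟨?_, hsuI0 i hai⟩
      by_contra haie
      have htrans0 : ∀ j, a j d0 = 0 → 0 ≤ (a j p - b j) * a j e := by
        intro j hj
        have h1 := heK j
        have h2 := hsuI0 j hj
        by_contra hcneg
        push_neg at hcneg
        have f1 : 0 ≤ ((a j p - b j) * (a j q - b j)) * ((a j q - b j) * a j e) :=
          mul_nonneg h2.le h1
        have f2 : ((a j p - b j) * a j e) * ((a j q - b j) * (a j q - b j)) < 0 :=
          mul_neg_of_neg_of_pos hcneg (mul_self_pos.2 (hune j))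
        nlinarith [f1, f2]
      have htransne : ∀ j, a j d0 ≠ 0 → (a j p - b j) * a j e ≤ 0 := by
        intro j hj
        have h1 := heK j
        have h2 := hsuneg j hj
        by_contra hcpos
        push_neg at hcpos
        have f1 : ((a j p - b j) * (a j q - b j)) * ((a j q - b j) * a j e) ≤ 0 :=
          mul_nonpos_iff.2 (Or.inr ⟨h2.le, h1⟩)
        have f2 : 0 < ((a j p - b j) * a j e) * ((a j q - b j) * (a j q - b j)) :=
          mul_pos hcpos (mul_self_pos.2 (hune j))
        nlinarith [f1, f2]
      haveI : Nonempty (Fin n) := ⟨i⟩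
      set g : Fin n → ℝ := fun j =>
        if 0 < (a j p - b j) * a j d0 then (-((a j p - b j) * a j e)) / ((a j p - b j) * a j d0)
        else 0 with hg
      set τ : ℝ := max 0 (Finset.univ.sup' Finset.univ_nonempty g) with hτ
      have hτg : ∀ j, g j ≤ τ := fun j =>
        le_trans (Finset.le_sup' g (Finset.mem_univ j)) (le_max_right _ _)
      have hwKC : ∀ j, 0 ≤ (a j p - b j) * a j (e + τ • d0) := by
        intro j
        simp only [map_add, map_smul, smul_eq_mul]
        by_cases hj : a j d0 = 0
        · rw [hj]
          nlinarith [htrans0 j hj]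
        · have hposj := hposd0 j hj
          have hgj : g j = (-((a j p - b j) * a j e)) / ((a j p - b j) * a j d0) := by
            rw [hg]; simp only [if_pos hposj]
          have h1 : (-((a j p - b j) * a j e)) / ((a j p - b j) * a j d0) ≤ τ := by
            rw [← hgj]; exact hτg j
          have h2 := mul_le_mul_of_nonneg_right h1 hposj.le
          have h3 : (-((a j p - b j) * a j e)) / ((a j p - b j) * a j d0) * ((a j p - b j) * a j d0)
              = -((a j p - b j) * a j e) := div_mul_cancel₀ _ hposj.ne'
          nlinarith [h2, h3]
      have hz := hI0ker i hai (e + τ • d0) hwKC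
      simp only [map_add, map_smul, smul_eq_mul, hai, mul_zero, add_zero] at hz
      exact haie hz
    · left
      have h1 := heK i
      have h2 : (a i q - b i) * a i e ≠ 0 := by
        intro h0
        have hz := hKDker i h0 (-d0) hnegd0KD
        rw [map_neg, neg_eq_zero] at hz
        exact hai hz
      have hupos : 0 < (a i q - b i) * a i e := lt_of_le_of_ne h1 (Ne.symm h2)
      refine ⟨hupos, ?_⟩
      have h3 := hsuneg i hai
      by_contra hge
      push_neg at hge
      have f1 : ((a i p - b i) * (a i q - b i)) * ((a i q - b i) * a i e) < 0 :=
        mul_neg_of_neg_of_pos h3 hupos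
      have f2 : 0 ≤ ((a i p - b i) * a i e) * ((a i q - b i) * (a i q - b i)) :=
        mul_nonneg hge (mul_self_nonneg _)
      nlinarith [f1, f2]
  have hev : ∀ i, ∀ᶠ t : ℝ in Filter.atBot, 0 < (a i p - b i) * (a i y + t * a i e - b i) := by
    intro i
    rcases hmain i with ⟨h1, h2⟩ | ⟨h1, h2⟩
    · rw [Filter.eventually_atBot]
      refine ⟨(-((a i p - b i) * (a i y - b i))) / ((a i p - b i) * a i e) - 1, fun t ht => ?_⟩
      have hBne : (a i p - b i) * a i e ≠ 0 := ne_of_lt h2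
      have f2 : (-((a i p - b i) * (a i y - b i))) / ((a i p - b i) * a i e) * ((a i p - b i) * a i e)
          = -((a i p - b i) * (a i y - b i)) := div_mul_cancel₀ _ hBne
      have f1 := mul_le_mul_of_nonpos_right ht h2.le
      nlinarith [f1, f2, h2]
    · refine Filter.Eventually.of_forall fun t => ?_
      rw [h1, mul_zero, add_zero]
      have f1 : 0 < ((a i p - b i) * (a i q - b i)) * ((a i q - b i) * (a i y - b i)) :=
        mul_pos h2 (hyDi i)
      by_contra hc
      push_neg at hc
      have f3 : ((a i p - b i) * (a i y - b i)) * ((a i q - b i) * (a i q - b i)) ≤ 0 :=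
        mul_nonpos_iff.2 (Or.inr ⟨hc, mul_self_nonneg _⟩)
      nlinarith [f1, f3]
  have hall := (Filter.eventually_all).2 hev
  refine hall.mono fun t ht => ?_
  rw [hCd]
  simp only [Set.mem_setOf_eq]
  intro i
  have h1 := ht i
  simp only [map_add, map_smul, smul_eq_mul]
  exact h1
end
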